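/- (Common regularity lemma, algebraic core) Let G act transitively on a set X by two actions ρ₁, ρ₂, let Φ₀ and Φ be two (ρ₁,ρ₂)-equivariant bijections X → X, fix x ∈ X with ρ₁-stabilizer H, and assume the normalizer of H (for ρ₂, stabilizers of Φ(x) and Φ₀(x) both being H) equals H·Z(G). Then there exists z₀ ∈ Z(G) such that Φ = ρ₂(z₀) ∘ Φ₀. -/

import Mathlib

open Pointwise

/-- Common regularity lemma, algebraic core: under condition (A), two equivariant bijections
between two transitive actions differ by a central element acting via `ρ₂`. -/
theorem stmt_10 {G X : Type*} [Group G] (ρ₁ ρ₂ : G →* Equiv.Perm X)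
    (htrans₁ : ∀ x y : X, ∃ g : G, ρ₁ g x = y)
    (htrans₂ : ∀ x y : X, ∃ g : G, ρ₂ g x = y)
    (x : X) (H : Subgroup G) (hH : ∀ g : G, g ∈ H ↔ ρ₁ g x = x)
    (hA : (Subgroup.normalizer (H : Set G) : Set G) = (H : Set G) * (Subgroup.center G : Set G))
    (Φ₀ Φ : X ≃ X)
    (hΦ₀ : ∀ (g : G) (y : X), Φ₀ (ρ₁ g y) = ρ₂ g (Φ₀ y))
    (hΦ : ∀ (g : G) (y : X), Φ (ρ₁ g y) = ρ₂ g (Φ y)) :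
    ∃ z₀ ∈ Subgroup.center G, ∀ y : X, Φ y = ρ₂ z₀ (Φ₀ y) := by
  -- stabilizer characterizations
  have hstab₀ : ∀ g : G, g ∈ H ↔ ρ₂ g (Φ₀ x) = Φ₀ x := by
    intro g
    rw [hH, ← hΦ₀ g x, Φ₀.apply_eq_iff_eq]
  have hstab : ∀ g : G, g ∈ H ↔ ρ₂ g (Φ x) = Φ x := by
    intro g
    rw [hH, ← hΦ g x, Φ.apply_eq_iff_eq]
  obtain ⟨g₀, hg₀⟩ := htrans₂ (Φ₀ x) (Φ x)
  have hg₀mem : g₀ ∈ Subgroup.normalizer (H : Set G) := by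
    rw [Subgroup.mem_normalizer_iff]
    intro h
    rw [hstab₀ h, hstab (g₀ * h * g₀⁻¹)]
    constructor
    · intro hh
      have : ρ₂ g₀⁻¹ (Φ x) = Φ₀ x := by
        rw [← hg₀]
        simp
      simp only [map_mul, Equiv.Perm.coe_mul, Function.comp_apply, this, hh, hg₀]
    · intro hh
      have h1 : ρ₂ g₀⁻¹ (Φ x) = Φ₀ x := by
        rw [← hg₀]; simp
      have := hh
      simp only [map_mul, Equiv.Perm.coe_mul, Function.comp_apply, h1] at this
      -- this : ρ₂ g₀ (ρ₂ h (Φ₀ x)) = Φ x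
      rw [← hg₀] at this
      exact (Equiv.apply_eq_iff_eq (ρ₂ g₀)).mp this
  have : g₀ ∈ (H : Set G) * (Subgroup.center G : Set G) := by
    rw [← hA]; exact hg₀mem
  obtain ⟨h₀, hh₀, z₀, hz₀, hprod⟩ := this
  refine ⟨z₀, hz₀, ?_⟩
  have key : Φ x = ρ₂ z₀ (Φ₀ x) := by
    rw [← hg₀, ← hprod]
    have hfix : ρ₂ h₀ (Φ₀ x) = Φ₀ x := (hstab₀ h₀).mp hh₀
    have hc : z₀ * h₀ = h₀ * z₀ := ((Subgroup.mem_center_iff.mp hz₀) h₀).symm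
    show ρ₂ (h₀ * z₀) (Φ₀ x) = _
    rw [← hc]
    simp [map_mul, hfix]
  intro y
  obtain ⟨g, hg⟩ := htrans₁ x y
  rw [← hg, hΦ g x, hΦ₀ g x, key]
  have hc : z₀ * g = g * z₀ := ((Subgroup.mem_center_iff.mp hz₀) g).symm
  calc ρ₂ g (ρ₂ z₀ (Φ₀ x)) = ρ₂ (g * z₀) (Φ₀ x) := by simp [map_mul]
    _ = ρ₂ (z₀ * g) (Φ₀ x) := by rw [hc]
    _ = ρ₂ z₀ (ρ₂ g (Φ₀ x)) := by simp [map_mul]
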